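/- Let Ω ⊂ ℝ^k be open with Lebesgue measure μ, let ψ be a strictly increasing Young function satisfying condition Δ2 globally with lim_{t→0+} ψ(t)/t = 0 and lim_{t→∞} t/ψ(t) = 0, and let τ(t)=1/ψ(1/t) for t>0, τ(0)=0. Then the functional ρ(f) = ∫₀^∞ τ⁻¹(μ_f(s)) ds on nonnegative measurable functions on Ω has the Fatou property: if (f_n) is a sequence of nonnegative measurable functions increasing almost everywhere to f, then ρ(f_n) increases to ρ(f). -/
import Mathlib


open MeasureTheory Filter Topology Set
open scoped ENNReal

/-- A (finite-valued) Young function: non-decreasing, left-continuous and convex on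
`[0, ∞)`, with `ψ 0 = 0 = lim_{t→0+} ψ t` and `lim_{t→∞} ψ t = ∞`. -/
def IsYoung (ψ : ℝ → ℝ) : Prop :=
  MonotoneOn ψ (Set.Ici 0) ∧
  ConvexOn ℝ (Set.Ici 0) ψ ∧
  (∀ t : ℝ, 0 < t → Tendsto ψ (𝓝[<] t) (𝓝 (ψ t))) ∧
  ψ 0 = 0 ∧ Tendsto ψ (𝓝[>] 0) (𝓝 0) ∧
  Tendsto ψ atTop atTop

/-- The Young function `ψ` satisfies condition `Δ₂` globally. -/
def Delta2 (ψ : ℝ → ℝ) : Prop :=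
  ∃ d : ℝ, 1 < d ∧ ∀ t : ℝ, 0 < t → ψ (2 * t) ≤ d * ψ t

/-- The distribution function `μ_f(s) = μ {x ∈ Ω : f x > s}` of a nonnegative
function `f` on `Ω`. -/
noncomputable def distribFn₀ {k : ℕ} (Ω : Set (EuclideanSpace ℝ (Fin k)))
    (f : EuclideanSpace ℝ (Fin k) → ℝ) (s : ℝ) : ℝ≥0∞ :=
  volume {x | x ∈ Ω ∧ s < f x}

/-- The `[0, ∞]`-valued extension of `σ = τ⁻¹ : [0, ∞) → [0, ∞)`. -/
noncomputable def extInv (σ : ℝ → ℝ) : ℝ≥0∞ → ℝ≥0∞ :=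
  fun a => if a = ∞ then ∞ else ENNReal.ofReal (σ a.toReal)

/-- The functional `ρ(f) = ∫₀^∞ τ⁻¹(μ_f(s)) ds` on nonnegative measurable functions
on `Ω`, where `σ = τ⁻¹`. -/
noncomputable def rhoFn {k : ℕ} (Ω : Set (EuclideanSpace ℝ (Fin k))) (σ : ℝ → ℝ)
    (f : EuclideanSpace ℝ (Fin k) → ℝ) : ℝ≥0∞ :=
  ∫⁻ s in Set.Ioi (0 : ℝ), extInv σ (distribFn₀ Ω f s)

/-- `extInv σ` is monotone whenever `σ` is monotone on `[0, ∞)`. -/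
lemma extInv_mono' {σ : ℝ → ℝ} (hσmono : MonotoneOn σ (Set.Ici 0)) :
    Monotone (extInv σ) := by
  intro a b hab
  by_cases hb : b = ∞
  · simp [extInv, hb]
  · have ha : a ≠ ∞ := fun h => hb (top_le_iff.1 (h ▸ hab))
    simp only [extInv, if_neg ha, if_neg hb]
    exact ENNReal.ofReal_le_ofReal
      (hσmono (Set.mem_Ici.2 ENNReal.toReal_nonneg) (Set.mem_Ici.2 ENNReal.toReal_nonneg)
        (ENNReal.toReal_mono hb hab))

/-- `extInv σ` commutes with suprema of monotone sequences, when `σ` is a monotone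
left inverse of the monotone `τ`. -/
lemma extInv_iSup' {τ σ : ℝ → ℝ}
    (hτn : ∀ t : ℝ, 0 ≤ t → 0 ≤ τ t)
    (hσ_nonneg : ∀ t : ℝ, 0 ≤ t → 0 ≤ σ t)
    (hσ_left : ∀ t : ℝ, 0 ≤ t → σ (τ t) = t)
    (hσsm : StrictMonoOn σ (Set.Ici 0))
    (a : ℕ → ℝ≥0∞) (ha : Monotone a) :
    extInv σ (⨆ n, a n) = ⨆ n, extInv σ (a n) := by
  have hσmono : MonotoneOn σ (Set.Ici 0) := hσsm.monotoneOn
  by_cases hfin : ∃ n, a n = ∞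
  · obtain ⟨n, hn⟩ := hfin
    have h1 : (⨆ m, a m) = ∞ := top_le_iff.1 (hn ▸ le_iSup a n)
    have h2 : extInv σ (a n) = ∞ := by simp [extInv, hn]
    have h3 : extInv σ (a n) ≤ ⨆ m, extInv σ (a m) := le_iSup (fun m => extInv σ (a m)) n
    rw [h2] at h3
    rw [h1]
    simp only [extInv, if_pos rfl]
    exact (top_le_iff.1 h3).symm
  push_neg at hfin
  by_cases hA : (⨆ n, a n) = ∞
  · rw [hA]
    simp only [extInv, if_pos rfl]
    refine (ENNReal.eq_top_of_forall_nnreal_le ?_).symm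
    intro r
    have hr : (0 : ℝ) ≤ (r : ℝ) := r.2
    have hτr : 0 ≤ τ (r : ℝ) := hτn _ hr
    obtain ⟨n, hn⟩ : ∃ n, ENNReal.ofReal (τ (r : ℝ)) < a n := by
      by_contra h
      push_neg at h
      exact (ENNReal.ofReal_ne_top) (top_le_iff.1 (hA ▸ iSup_le h))
    have h1 : τ (r : ℝ) ≤ (a n).toReal :=
      le_of_lt ((ENNReal.ofReal_lt_iff_lt_toReal hτr (hfin n)).1 hn)
    have h2 : (r : ℝ) ≤ σ ((a n).toReal) := by
      rw [← hσ_left (r : ℝ) hr]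
      exact hσmono (Set.mem_Ici.2 hτr) (Set.mem_Ici.2 ENNReal.toReal_nonneg) h1
    calc (r : ℝ≥0∞) = ENNReal.ofReal (r : ℝ) := ENNReal.ofReal_coe_nnreal.symm
      _ ≤ ENNReal.ofReal (σ ((a n).toReal)) := ENNReal.ofReal_le_ofReal h2
      _ = extInv σ (a n) := by simp [extInv, hfin n]
      _ ≤ ⨆ n, extInv σ (a n) := le_iSup (fun m => extInv σ (a m)) n
  · -- finite supremum
    have haA : ∀ n, a n ≤ ⨆ m, a m := le_iSup a
    have haT : Tendsto a atTop (𝓝 (⨆ n, a n)) := tendsto_atTop_iSup ha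
    have htT : Tendsto (fun n => (a n).toReal) atTop (𝓝 ((⨆ n, a n).toReal)) :=
      (ENNReal.tendsto_toReal hA).comp haT
    have htmono : Monotone fun n => (a n).toReal :=
      fun m n h => ENNReal.toReal_mono (hfin n) (ha h)
    have hlub : IsLUB (Set.range fun n => (a n).toReal) ((⨆ n, a n).toReal) :=
      isLUB_of_tendsto_atTop htmono htT
    have hslub : IsLUB (Set.range fun n => σ ((a n).toReal)) (σ ((⨆ n, a n).toReal)) := by
      constructor
      · rintro _ ⟨n, rfl⟩
        exact hσmono (Set.mem_Ici.2 ENNReal.toReal_nonneg)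
          (Set.mem_Ici.2 ENNReal.toReal_nonneg) (ENNReal.toReal_mono hA (haA n))
      · intro c hc
        by_contra hlt
        push_neg at hlt
        have hc0 : 0 ≤ c :=
          le_trans (hσ_nonneg _ ENNReal.toReal_nonneg) (hc ⟨0, rfl⟩)
        have hu : σ (τ c) = c := hσ_left c hc0
        have huc : τ c < (⨆ n, a n).toReal := by
          by_contra h
          push_neg at h
          have := hσmono (Set.mem_Ici.2 ENNReal.toReal_nonneg)
            (Set.mem_Ici.2 (hτn c hc0)) h
          rw [hu] at this
          exact absurd hlt (not_lt.2 this)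
        obtain ⟨n, hn⟩ : ∃ n, τ c < (a n).toReal := by
          by_contra h
          push_neg at h
          refine absurd (hlub.2 ?_) (not_le.2 huc)
          rintro _ ⟨n, rfl⟩
          exact h n
        have : c < σ ((a n).toReal) :=
          hu ▸ hσsm (Set.mem_Ici.2 (hτn c hc0)) (Set.mem_Ici.2 ENNReal.toReal_nonneg) hn
        exact absurd (hc ⟨n, rfl⟩) (not_le.2 this)
    have hσT : Tendsto (fun n => σ ((a n).toReal)) atTop (𝓝 (σ ((⨆ n, a n).toReal))) :=
      tendsto_atTop_isLUB (fun m n h => hσmono (Set.mem_Ici.2 ENNReal.toReal_nonneg)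
        (Set.mem_Ici.2 ENNReal.toReal_nonneg) (htmono h)) hslub
    have hbT : Tendsto (fun n => extInv σ (a n)) atTop (𝓝 (extInv σ (⨆ n, a n))) := by
      have h5 : Tendsto (fun n => ENNReal.ofReal (σ ((a n).toReal))) atTop
          (𝓝 (ENNReal.ofReal (σ ((⨆ n, a n).toReal)))) :=
        (ENNReal.continuous_ofReal.tendsto _).comp hσT
      have h6 : (fun n => extInv σ (a n)) = fun n => ENNReal.ofReal (σ ((a n).toReal)) :=
        funext fun n => by simp [extInv, hfin n]
      have h7 : extInv σ (⨆ n, a n) = ENNReal.ofReal (σ ((⨆ n, a n).toReal)) := by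
        simp [extInv, hA]
      rw [h6, h7]
      exact h5
    have hbmono : Monotone fun n => extInv σ (a n) :=
      fun m n h => extInv_mono' hσmono (ha h)
    exact tendsto_nhds_unique hbT (tendsto_atTop_iSup hbmono)

/-- The functional `ρ(f) = ∫₀^∞ τ⁻¹(μ_f(s)) ds` on nonnegative
measurable functions on `Ω` has the Fatou property: if `(f_n)` increases almost
everywhere to `f`, then `ρ(f_n)` increases to `ρ(f)`. -/
theorem stmt13 {k : ℕ}
    (Ω : Set (EuclideanSpace ℝ (Fin k))) (hΩ : IsOpen Ω)
    (ψ : ℝ → ℝ) (hY : IsYoung ψ) (hsm : StrictMonoOn ψ (Set.Ici 0)) (hΔ : Delta2 ψ)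
    (h0 : Tendsto (fun t => ψ t / t) (𝓝[>] 0) (𝓝 0))
    (htop : Tendsto (fun t => t / ψ t) atTop (𝓝 0))
    (τ : ℝ → ℝ) (hτ0 : τ 0 = 0) (hτ : ∀ t : ℝ, 0 < t → τ t = 1 / ψ (1 / t))
    (σ : ℝ → ℝ) (hσ_nonneg : ∀ t : ℝ, 0 ≤ t → 0 ≤ σ t)
    (hσ_left : ∀ t : ℝ, 0 ≤ t → σ (τ t) = t)
    (hσ_right : ∀ t : ℝ, 0 ≤ t → τ (σ t) = t)
    (fseq : ℕ → EuclideanSpace ℝ (Fin k) → ℝ) (f : EuclideanSpace ℝ (Fin k) → ℝ)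
    (hfseq : ∀ n, Measurable (fseq n)) (hf : Measurable f)
    (hfseq0 : ∀ n, ∀ᵐ x ∂(volume.restrict Ω), 0 ≤ fseq n x)
    (hf0 : ∀ᵐ x ∂(volume.restrict Ω), 0 ≤ f x)
    (hmono : ∀ᵐ x ∂(volume.restrict Ω), Monotone (fun n => fseq n x))
    (hlim : ∀ᵐ x ∂(volume.restrict Ω), Tendsto (fun n => fseq n x) atTop (𝓝 (f x))) :
    Monotone (fun n => rhoFn Ω σ (fseq n)) ∧
      Tendsto (fun n => rhoFn Ω σ (fseq n)) atTop (𝓝 (rhoFn Ω σ f)) := by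
  obtain ⟨hψmono, -, -, hψ0, -, -⟩ := hY
  have hψpos : ∀ u : ℝ, 0 < u → 0 < ψ u := fun u hu =>
    hψ0 ▸ hsm Set.self_mem_Ici (Set.mem_Ici.2 hu.le) hu
  have hτn : ∀ t : ℝ, 0 ≤ t → 0 ≤ τ t := by
    intro t ht
    rcases ht.eq_or_lt with h | h
    · rw [← h, hτ0]
    · rw [hτ t h]
      exact (one_div_pos.2 (hψpos _ (one_div_pos.2 h))).le
  have hτmono : MonotoneOn τ (Set.Ici 0) := by
    intro a ha b hb hab
    rcases (Set.mem_Ici.1 ha).eq_or_lt with h | h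
    · rw [← h, hτ0]
      exact hτn b hb
    · have hb' : 0 < b := lt_of_lt_of_le h hab
      rw [hτ a h, hτ b hb']
      have h1 : 1 / b ≤ 1 / a := one_div_le_one_div_of_le h hab
      have h2 : ψ (1 / b) ≤ ψ (1 / a) :=
        hψmono (Set.mem_Ici.2 (one_div_pos.2 hb').le) (Set.mem_Ici.2 (one_div_pos.2 h).le) h1
      exact one_div_le_one_div_of_le (hψpos _ (one_div_pos.2 hb')) h2
  have hσsm : StrictMonoOn σ (Set.Ici 0) := by
    intro a ha b hb hab
    by_contra h
    push_neg at h
    have := hτmono (Set.mem_Ici.2 (hσ_nonneg b hb)) (Set.mem_Ici.2 (hσ_nonneg a ha)) h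
    rw [hσ_right a ha, hσ_right b hb] at this
    exact absurd hab (not_lt.2 this)
  have hσmono : MonotoneOn σ (Set.Ici 0) := hσsm.monotoneOn
  have hΩm : MeasurableSet Ω := hΩ.measurableSet
  have hdist : ∀ (g : EuclideanSpace ℝ (Fin k) → ℝ) (s : ℝ),
      distribFn₀ Ω g s = volume.restrict Ω {x | s < g x} := by
    intro g s
    rw [Measure.restrict_apply' hΩm]
    unfold distribFn₀
    congr 1
    ext x
    simp only [Set.mem_setOf_eq, Set.mem_inter_iff]
    tauto
  have hDmono : ∀ s : ℝ, Monotone fun n => distribFn₀ Ω (fseq n) s := by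
    intro s m n hmn
    simp only [hdist]
    refine measure_mono_ae ?_
    filter_upwards [hmono] with x hx hxm
    exact lt_of_lt_of_le hxm (hx hmn)
  have hDsup : ∀ s : ℝ, distribFn₀ Ω f s = ⨆ n, distribFn₀ Ω (fseq n) s := by
    intro s
    simp only [hdist]
    set B : ℕ → Set (EuclideanSpace ℝ (Fin k)) := fun n => {x | s < fseq n x} with hB
    set C : ℕ → Set (EuclideanSpace ℝ (Fin k)) := fun n => ⋃ m ≤ n, B m with hC
    have hCmono : Monotone C := fun m n hmn =>
      Set.iUnion₂_mono' fun i hi => ⟨i, le_trans hi hmn, subset_rfl⟩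
    have hCB : ∀ n, C n =ᵐ[volume.restrict Ω] B n := by
      intro n
      refine Filter.eventuallyEq_set.2 ?_
      filter_upwards [hmono] with x hx
      constructor
      · intro hxC
        simp only [hC, Set.mem_iUnion] at hxC
        obtain ⟨m, hm, hxm⟩ := hxC
        exact lt_of_lt_of_le hxm (hx hm)
      · intro hxB
        exact Set.mem_iUnion₂.2 ⟨n, le_rfl, hxB⟩
    have hUnion : {x | s < f x} =ᵐ[volume.restrict Ω] ⋃ n, B n := by
      refine Filter.eventuallyEq_set.2 ?_
      filter_upwards [hmono, hlim] with x hx hlx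
      simp only [Set.mem_iUnion, Set.mem_setOf_eq, hB]
      constructor
      · intro hsf
        exact (hlx.eventually (eventually_gt_nhds hsf)).exists
      · rintro ⟨n, hn⟩
        exact lt_of_lt_of_le hn (hx.ge_of_tendsto hlx n)
    have hCBU : (⋃ n, C n) = ⋃ n, B n := by
      refine Set.Subset.antisymm
        (Set.iUnion_subset fun n => Set.iUnion₂_subset fun m _ => Set.subset_iUnion B m)
        (Set.iUnion_mono fun n x hx => Set.mem_iUnion₂.2 ⟨n, le_rfl, hx⟩)
    calc volume.restrict Ω {x | s < f x}
        = volume.restrict Ω (⋃ n, B n) := measure_congr hUnion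
      _ = volume.restrict Ω (⋃ n, C n) := by rw [hCBU]
      _ = ⨆ n, volume.restrict Ω (C n) := hCmono.measure_iUnion
      _ = ⨆ n, volume.restrict Ω (B n) := iSup_congr fun n => measure_congr (hCB n)
  have hg_meas : ∀ n, Measurable fun s => extInv σ (distribFn₀ Ω (fseq n) s) := by
    intro n
    have hanti : Antitone fun s => distribFn₀ Ω (fseq n) s := by
      intro s t hst
      refine measure_mono fun x hx => ⟨hx.1, lt_of_le_of_lt hst hx.2⟩
    exact Antitone.measurable fun s t hst => extInv_mono' hσmono (hanti hst)
  have hg_mono : Monotone fun n => fun s => extInv σ (distribFn₀ Ω (fseq n) s) :=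
    fun m n h s => extInv_mono' hσmono (hDmono s h)
  have hsup_int : rhoFn Ω σ f = ⨆ n, rhoFn Ω σ (fseq n) := by
    unfold rhoFn
    rw [show (fun s => extInv σ (distribFn₀ Ω f s)) =
        fun s => ⨆ n, extInv σ (distribFn₀ Ω (fseq n) s) from
      funext fun s => by
        rw [hDsup s]
        exact extInv_iSup' hτn hσ_nonneg hσ_left hσsm _ (hDmono s)]
    exact lintegral_iSup hg_meas hg_mono
  have hρmono : Monotone fun n => rhoFn Ω σ (fseq n) := fun m n h =>
    lintegral_mono fun s => extInv_mono' hσmono (hDmono s h)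
  exact ⟨hρmono, hsup_int ▸ tendsto_atTop_iSup hρmono⟩
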